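/- Consider a parallel-edge network with finite nonempty edge set E, each edge e from s to t with transit time 0 < τ_e < H and capacity ν_e > 0, a finite player set P with supply rates d_j > 0 and ∑_{j∈P} d_j ≥ ∑_{e∈E} ν_e, and time horizon H > 0. Then the value of a maximum flow over time equals ∑_{e∈E} ν_e · (H − τ_e); that is, every feasible flow over time f satisfies ∑_{j∈P} ρ_j(f) ≤ ∑_{e∈E} ν_e (H − τ_e), and there exists a feasible flow over time attaining equality (namely the one in which each player routes inflow proportionally to capacities, f⁺_{e,j}(θ) = d_j · ν_e / ∑_{e'∈E} ν_{e'} for all θ ∈ [0, H)). -/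

import Mathlib

open MeasureTheory
set_option maxHeartbeats 1000000

/-- A flow over time on a parallel-edge network with edge set `E` (edges from `s` to `t`,
with transit times `τ` and capacities `ν`), player set `P` with supply rates `d`, and time
horizon `H`: a family of nonnegative Lebesgue-integrable in- and outflow rate functions
(extended by `0` outside the time horizon) satisfying flow conservation
`∑ e, f⁺ e j θ = d j`. -/
structure FlowOverTime (E P : Type) [Fintype E] [Fintype P]
    (τ ν : E → ℝ) (d : P → ℝ) (H : ℝ) where
  /-- inflow rates `f⁺_{e,j}` -/
  fin : E → P → ℝ → ℝ
  /-- outflow rates `f⁻_{e,j}` -/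
  fout : E → P → ℝ → ℝ
  fin_nonneg : ∀ e j θ, 0 ≤ fin e j θ
  fout_nonneg : ∀ e j θ, 0 ≤ fout e j θ
  fin_supp : ∀ e j θ, θ ∉ Set.Ico (0 : ℝ) H → fin e j θ = 0
  fout_supp : ∀ e j θ, θ ∉ Set.Ico (τ e) H → fout e j θ = 0
  fin_integrable : ∀ e j, Integrable (fin e j)
  fout_integrable : ∀ e j, Integrable (fout e j)
  conservation : ∀ j θ, θ ∈ Set.Ico (0 : ℝ) H → ∑ e, fin e j θ = d j

namespace FlowOverTime

variable {E P : Type} [Fintype E] [Fintype P] {τ ν : E → ℝ} {d : P → ℝ} {H : ℝ}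

/-- Cumulative inflow `F⁺_{e,j}(θ) = ∫₀^θ f⁺_{e,j}`. -/
noncomputable def Fplus (f : FlowOverTime E P τ ν d H) (e : E) (j : P) (θ : ℝ) : ℝ :=
  ∫ t in (0:ℝ)..θ, f.fin e j t

/-- Cumulative outflow `F⁻_{e,j}(θ) = ∫₀^θ f⁻_{e,j}`. -/
noncomputable def Fminus (f : FlowOverTime E P τ ν d H) (e : E) (j : P) (θ : ℝ) : ℝ :=
  ∫ t in (0:ℝ)..θ, f.fout e j t

/-- Queue length `z_e(θ) = ∑_j F⁺_{e,j}(θ) − ∑_j F⁻_{e,j}(θ + τ_e)`. -/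
noncomputable def queue (f : FlowOverTime E P τ ν d H) (e : E) (θ : ℝ) : ℝ :=
  ∑ j, f.Fplus e j θ - ∑ j, f.Fminus e j (θ + τ e)

/-- Exit time `T_e(θ) = θ + z_e(θ)/ν_e + τ_e`. -/
noncomputable def exitTime (f : FlowOverTime E P τ ν d H) (e : E) (θ : ℝ) : ℝ :=
  θ + f.queue e θ / ν e + τ e

open Classical in
/-- Feasibility of a flow over time: non-deficit constraints, the deterministic queuing
condition (edges operate at capacity while the queue is nonempty), and fair merging of
the players' flows (a player's share of the outflow at time `θ` equals her share of the
inflow at time `φ = max T_e⁻¹(θ)`). -/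
def Feasible (f : FlowOverTime E P τ ν d H) : Prop :=
  (∀ e j θ, θ ∈ Set.Ico (0:ℝ) (H - τ e) → f.Fminus e j (θ + τ e) ≤ f.Fplus e j θ) ∧
  (∀ e θ, θ ∈ Set.Ico (0:ℝ) (H - τ e) →
      ∑ j, f.fout e j (θ + τ e) =
        if 0 < f.queue e θ then ν e else min (∑ j, f.fin e j θ) (ν e)) ∧
  (∀ e j θ, θ ∈ Set.Ico (0:ℝ) H → ∀ φ : ℝ,
      IsGreatest {ϑ : ℝ | ϑ ∈ Set.Ico (0:ℝ) H ∧ f.exitTime e ϑ = θ} φ →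
      f.fout e j θ =
        if 0 < ∑ j', f.fin e j' φ
        then (f.fin e j φ / ∑ j', f.fin e j' φ) * ∑ j', f.fout e j' θ
        else 0)

/-- Payoff of player `j`: the amount `∑_e F⁻_{e,j}(H)` of her flow arriving at `t`
before time `H`. -/
noncomputable def payoff (f : FlowOverTime E P τ ν d H) (j : P) : ℝ :=
  ∑ e, f.Fminus e j H

end FlowOverTime

/-- Integral of a constant indicator on `Ico a H` from `0` to `b`. -/
lemma integral_indicator_Ico_const (a b c H : ℝ) (ha : 0 ≤ a) (hab : a ≤ b) (hbH : b ≤ H) :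
    ∫ t in (0:ℝ)..b, (Set.Ico a H).indicator (fun _ => c) t = c * (b - a) := by
  rw [intervalIntegral.integral_of_le (ha.trans hab),
    MeasureTheory.setIntegral_indicator measurableSet_Ico, MeasureTheory.setIntegral_const]
  have hsub1 : Set.Ioo a b ⊆ Set.Ioc 0 b ∩ Set.Ico a H := by
    intro x hx
    exact ⟨⟨lt_of_le_of_lt ha hx.1, hx.2.le⟩, hx.1.le, lt_of_lt_of_le hx.2 hbH⟩
  have hsub2 : Set.Ioc 0 b ∩ Set.Ico a H ⊆ Set.Icc a b := fun x hx => ⟨hx.2.1, hx.1.2⟩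
  have hvol : volume (Set.Ioc 0 b ∩ Set.Ico a H) = ENNReal.ofReal (b - a) := by
    refine le_antisymm (le_trans (measure_mono hsub2) ?_) (le_trans ?_ (measure_mono hsub1))
    · rw [Real.volume_Icc]
    · rw [Real.volume_Ioo]
  rw [measureReal_def, hvol, ENNReal.toReal_ofReal (sub_nonneg.mpr hab), smul_eq_mul, mul_comm]

lemma integrable_indicator_Ico_const (a b c : ℝ) :
    Integrable ((Set.Ico a b).indicator (fun _ => c)) := by
  refine MeasureTheory.IntegrableOn.integrable_indicator ?_ measurableSet_Ico
  refine (integrableOn_const_iff).mpr (Or.inr ?_)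
  rw [Real.volume_Ico]
  exact ENNReal.ofReal_lt_top

/-- On a parallel-edge network with `0 < τ_e < H`, capacities `ν_e > 0`,
supply rates `d_j > 0` with `∑_j d_j ≥ ∑_e ν_e`, and time horizon `H > 0`, the value of a
maximum flow over time equals `∑_e ν_e (H − τ_e)`: every feasible flow over time has total
payoff at most this value, and the feasible flow over time in which every player routes
her inflow proportionally to the capacities attains it. -/
theorem max_flow_value_supply_ge_capacity
    {E P : Type} [Fintype E] [Fintype P] [Nonempty E]
    (τ ν : E → ℝ) (d : P → ℝ) (H : ℝ)
    (hτ : ∀ e, 0 < τ e) (hτH : ∀ e, τ e < H) (hν : ∀ e, 0 < ν e)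
    (hd : ∀ j, 0 < d j) (hH : 0 < H)
    (hsupply : ∑ e, ν e ≤ ∑ j, d j) :
    (∀ f : FlowOverTime E P τ ν d H, f.Feasible →
        ∑ j, f.payoff j ≤ ∑ e, ν e * (H - τ e)) ∧
    (∃ f : FlowOverTime E P τ ν d H, f.Feasible ∧
        (∀ e j θ, θ ∈ Set.Ico (0:ℝ) H → f.fin e j θ = d j * ν e / ∑ e', ν e') ∧
        ∑ j, f.payoff j = ∑ e, ν e * (H - τ e)) := by
  classical
  set S : ℝ := ∑ e, ν e with hS
  set D : ℝ := ∑ j, d j with hD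
  have hSpos : 0 < S := Finset.sum_pos (fun e _ => hν e) Finset.univ_nonempty
  have hDpos : 0 < D := lt_of_lt_of_le hSpos hsupply
  have hSne : S ≠ 0 := ne_of_gt hSpos
  have hDne : D ≠ 0 := ne_of_gt hDpos
  constructor
  · -- upper bound
    intro f hf
    have key : ∀ e : E, ∑ j, f.Fminus e j H ≤ ν e * (H - τ e) := by
      intro e
      have hτe := hτ e
      have hτHe := hτH e
      have hsum : ∑ j, f.Fminus e j H = ∫ t in (0:ℝ)..H, ∑ j, f.fout e j t := by
        rw [intervalIntegral.integral_finset_sum]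
        · rfl
        · intro j _
          exact (f.fout_integrable e j).intervalIntegrable
      rw [hsum]
      have hind : ∫ t in (0:ℝ)..H,
          (Set.Ico (τ e) H).indicator (fun _ => ν e) t = ν e * (H - τ e) :=
        integral_indicator_Ico_const (τ e) H (ν e) H (hτe.le) (hτHe.le) le_rfl
      rw [← hind]
      apply intervalIntegral.integral_mono_on hH.le
      · exact (integrable_finset_sum _
          (fun j _ => f.fout_integrable e j)).intervalIntegrable
      · exact (integrable_indicator_Ico_const (τ e) H (ν e)).intervalIntegrable
      · intro x hx
        by_cases hxm : x ∈ Set.Ico (τ e) H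
        · rw [Set.indicator_of_mem hxm]
          have hθ : x - τ e ∈ Set.Ico (0:ℝ) (H - τ e) :=
            ⟨sub_nonneg.mpr hxm.1, by linarith [hxm.2]⟩
          have := hf.2.1 e (x - τ e) hθ
          rw [sub_add_cancel] at this
          rw [this]
          split_ifs
          · exact le_rfl
          · exact min_le_right _ _
        · rw [Set.indicator_of_notMem hxm]
          have : ∀ j, f.fout e j x = 0 := fun j => f.fout_supp e j x hxm
          simp [this]
    calc ∑ j, f.payoff j = ∑ e, ∑ j, f.Fminus e j H := by
          rw [Finset.sum_comm]; rfl
      _ ≤ ∑ e, ν e * (H - τ e) := Finset.sum_le_sum fun e _ => key e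
  · -- construction
    refine ⟨{ fin := fun e j => (Set.Ico (0:ℝ) H).indicator (fun _ => d j * ν e / S)
              fout := fun e j => (Set.Ico (τ e) H).indicator (fun _ => d j * ν e / D)
              fin_nonneg := ?_
              fout_nonneg := ?_
              fin_supp := ?_
              fout_supp := ?_
              fin_integrable := fun e j => integrable_indicator_Ico_const 0 H _
              fout_integrable := fun e j => integrable_indicator_Ico_const (τ e) H _
              conservation := ?_ }, ?_, ?_, ?_⟩
    · intro e j θ
      exact Set.indicator_nonneg
        (fun _ _ => div_nonneg (mul_nonneg (hd j).le (hν e).le) hSpos.le) θ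
    · intro e j θ
      exact Set.indicator_nonneg
        (fun _ _ => div_nonneg (mul_nonneg (hd j).le (hν e).le) hDpos.le) θ
    · intro e j θ hθ; exact Set.indicator_of_notMem hθ _
    · intro e j θ hθ; exact Set.indicator_of_notMem hθ _
    · intro j θ hθ
      calc ∑ e, (Set.Ico (0:ℝ) H).indicator (fun _ => d j * ν e / S) θ
          = ∑ e, d j * ν e / S := by
            exact Finset.sum_congr rfl fun e _ => Set.indicator_of_mem hθ _
        _ = ∑ e, (d j / S) * ν e := by
            exact Finset.sum_congr rfl fun e _ => by ring
        _ = (d j / S) * S := by rw [← Finset.mul_sum]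
        _ = d j := by field_simp
    · -- feasibility
      refine ⟨?_, ?_, ?_⟩
      · -- non-deficit
        intro e j θ hθ
        have hτe := hτ e
        have hτHe := hτH e
        have hFm : (∫ t in (0:ℝ)..(θ + τ e),
            (Set.Ico (τ e) H).indicator (fun _ => d j * ν e / D) t)
            = d j * ν e / D * θ := by
          have := integral_indicator_Ico_const (τ e) (θ + τ e) (d j * ν e / D) H
            hτe.le (by linarith [hθ.1]) (by linarith [hθ.2])
          simpa using this
        have hFp : (∫ t in (0:ℝ)..θ,
            (Set.Ico (0:ℝ) H).indicator (fun _ => d j * ν e / S) t)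
            = d j * ν e / S * θ := by
          have := integral_indicator_Ico_const 0 θ (d j * ν e / S) H
            le_rfl hθ.1 (by linarith [hθ.2, hτe])
          simpa using this
        simp only [FlowOverTime.Fminus, FlowOverTime.Fplus]
        rw [hFm, hFp]
        apply mul_le_mul_of_nonneg_right _ hθ.1
        exact div_le_div_of_nonneg_left (mul_nonneg (hd j).le (hν e).le) hSpos hsupply
      · -- queueing condition
        intro e θ hθ
        have hτe := hτ e
        have hmem : θ + τ e ∈ Set.Ico (τ e) H := ⟨by linarith [hθ.1], by linarith [hθ.2]⟩
        have hmem0 : θ ∈ Set.Ico (0:ℝ) H := ⟨hθ.1, by linarith [hθ.2, hτe]⟩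
        have hlhs : ∑ j, (Set.Ico (τ e) H).indicator
            (fun _ => d j * ν e / D) (θ + τ e) = ν e := by
          calc ∑ j, (Set.Ico (τ e) H).indicator (fun _ => d j * ν e / D) (θ + τ e)
              = ∑ j, d j * (ν e / D) := by
                refine Finset.sum_congr rfl fun j _ => ?_
                rw [Set.indicator_of_mem hmem]; ring
            _ = D * (ν e / D) := by rw [← Finset.sum_mul]
            _ = ν e := by field_simp
        have hin : ∑ j, (Set.Ico (0:ℝ) H).indicator
            (fun _ => d j * ν e / S) θ = D * (ν e / S) := by
          calc ∑ j, (Set.Ico (0:ℝ) H).indicator (fun _ => d j * ν e / S) θ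
              = ∑ j, d j * (ν e / S) := by
                refine Finset.sum_congr rfl fun j _ => ?_
                rw [Set.indicator_of_mem hmem0]; ring
            _ = D * (ν e / S) := by rw [← Finset.sum_mul]
        simp only [hlhs, hin]
        have hge : ν e ≤ D * (ν e / S) := by
          calc ν e = S * (ν e / S) := by field_simp
            _ ≤ D * (ν e / S) := by
                exact mul_le_mul_of_nonneg_right hsupply (div_pos (hν e) hSpos).le
        split_ifs
        · rfl
        · exact (min_eq_right hge).symm
      · -- fair merging
        intro e j θ hθ φ hφ
        have hφmem : φ ∈ Set.Ico (0:ℝ) H := hφ.1.1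
        have hτe := hτ e
        have hsumin : ∑ j', (Set.Ico (0:ℝ) H).indicator
            (fun _ => d j' * ν e / S) φ = D * (ν e / S) := by
          calc ∑ j', (Set.Ico (0:ℝ) H).indicator (fun _ => d j' * ν e / S) φ
              = ∑ j', d j' * (ν e / S) := by
                refine Finset.sum_congr rfl fun j' _ => ?_
                rw [Set.indicator_of_mem hφmem]; ring
            _ = D * (ν e / S) := by rw [← Finset.sum_mul]
        have hνe : ν e ≠ 0 := (hν e).ne'
        simp only [Set.indicator_of_mem hφmem]
        have hsumin2 : ∑ j' : P, d j' * ν e / S = D * (ν e / S) := by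
          calc ∑ j' : P, d j' * ν e / S = ∑ j' : P, d j' * (ν e / S) := by
                exact Finset.sum_congr rfl fun j' _ => by ring
            _ = D * (ν e / S) := by rw [← Finset.sum_mul]
        rw [hsumin2, if_pos (mul_pos hDpos (div_pos (hν e) hSpos))]
        have hr : d j * ν e / S / (D * (ν e / S)) = d j / D := by
          field_simp
        rw [hr]
        by_cases hθτ : θ ∈ Set.Ico (τ e) H
        · have hsout : ∑ j', (Set.Ico (τ e) H).indicator
              (fun _ => d j' * ν e / D) θ = D * (ν e / D) := by
            calc ∑ j', (Set.Ico (τ e) H).indicator (fun _ => d j' * ν e / D) θ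
                = ∑ j', d j' * (ν e / D) := by
                  refine Finset.sum_congr rfl fun j' _ => ?_
                  rw [Set.indicator_of_mem hθτ]; ring
              _ = D * (ν e / D) := by rw [← Finset.sum_mul]
          rw [hsout, Set.indicator_of_mem hθτ]
          field_simp
        · have hz : ∀ j', (Set.Ico (τ e) H).indicator
              (fun _ => d j' * ν e / D) θ = 0 := fun j' => Set.indicator_of_notMem hθτ _
          simp [hz]
    · -- the inflow formula
      intro e j θ hθ
      show (Set.Ico (0:ℝ) H).indicator (fun _ => d j * ν e / S) θ = d j * ν e / S
      exact Set.indicator_of_mem hθ _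
    · -- total payoff
      have hFm : ∀ e j, (∫ t in (0:ℝ)..H,
          (Set.Ico (τ e) H).indicator (fun _ => d j * ν e / D) t)
          = d j * ν e / D * (H - τ e) := fun e j =>
        integral_indicator_Ico_const (τ e) H _ H (hτ e).le (hτH e).le le_rfl
      simp only [FlowOverTime.payoff, FlowOverTime.Fminus]
      calc ∑ j, (∑ e, ∫ t in (0:ℝ)..H,
            (Set.Ico (τ e) H).indicator (fun _ => d j * ν e / D) t)
          = ∑ j, ∑ e, d j * ν e / D * (H - τ e) := by
            exact Finset.sum_congr rfl fun j _ =>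
              Finset.sum_congr rfl fun e _ => hFm e j
        _ = ∑ e, ∑ j, d j * (ν e / D * (H - τ e)) := by
            rw [Finset.sum_comm]
            exact Finset.sum_congr rfl fun e _ =>
              Finset.sum_congr rfl fun j _ => by ring
        _ = ∑ e, D * (ν e / D * (H - τ e)) := by
            exact Finset.sum_congr rfl fun e _ => by rw [← Finset.sum_mul]
        _ = ∑ e, ν e * (H - τ e) := by
            refine Finset.sum_congr rfl fun e _ => ?_
            field_simp
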